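/- For all non-negative integers n and k, the r-Stirling numbers of the second kind satisfy S_r(n+r, k+r) = sum_{j} binomial(n, j) * r^{n-j} * S(j, k) summed over j from k to n, relating them to ordinary Stirling numbers via the e^{rt} factor in the generating function. -/

import Mathlib

open Finset Real

/-- Stirling numbers of the second kind `S(n, k)`. -/
def stirling2 : ℕ → ℕ → ℕ
  | 0, 0 => 1
  | 0, _ + 1 => 0
  | _ + 1, 0 => 0
  | n + 1, k + 1 => (k + 1) * stirling2 n (k + 1) + stirling2 n k

/-- The `r`-Stirling numbers of the second kind `S_r(n, k)` of Broder: the number of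
partitions of `{1, …, n}` into `k` non-empty subsets such that `1, …, r` lie in
distinct subsets (with the convention `S_r(n, k) = 0` for `n < r`). -/
def rStirling (r : ℕ) : ℕ → ℕ → ℕ
  | 0, k => if r = 0 ∧ k = 0 then 1 else 0
  | n + 1, k =>
    if n + 1 < r then 0
    else if n + 1 = r then (if k = r then 1 else 0)
    else
      match k with
      | 0 => 0
      | k + 1 => (k + 1) * rStirling r n (k + 1) + rStirling r n k

lemma stirling2_of_lt : ∀ {j k : ℕ}, j < k → stirling2 j k = 0
  | 0, _ + 1, _ => rfl
  | j + 1, k + 1, h => by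
    have h1 : j < k := Nat.lt_of_succ_lt_succ h
    simp [stirling2, stirling2_of_lt h1, stirling2_of_lt (Nat.lt_succ_of_lt h1)]

lemma rStirling_of_lt (r : ℕ) : ∀ (n k : ℕ), k < r → rStirling r n k = 0
  | 0, k, h => by
    have : ¬(r = 0 ∧ k = 0) := by omega
    simp [rStirling, this]
  | n + 1, k, h => by
    rcases lt_trichotomy (n + 1) r with hlt | heq | hgt
    · simp [rStirling, hlt]
    · have hk : k ≠ r := by omega
      simp [rStirling, heq, hk]
    · have h1 : ¬ n + 1 < r := by omega
      have h2 : n + 1 ≠ r := by omega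
      match k with
      | 0 => simp [rStirling, h1, h2]
      | k + 1 =>
        simp [rStirling, h1, h2,
          rStirling_of_lt r n (k + 1) h,
          rStirling_of_lt r n k (by omega)]

lemma rStirling_succ_succ (r n k : ℕ) (h1 : ¬ n + 1 < r) (h2 : n + 1 ≠ r) :
    rStirling r (n + 1) (k + 1) = (k + 1) * rStirling r n (k + 1) + rStirling r n k := by
  simp [rStirling, h1, h2]

lemma key (r n : ℕ) : ∀ k : ℕ,
    rStirling r (n + r) (k + r) =
      ∑ j ∈ Finset.range (n + 1), Nat.choose n j * r ^ (n - j) * stirling2 j k := by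
  induction n with
  | zero =>
    intro k
    simp only [Finset.range_one, Finset.sum_singleton, Nat.choose_self, pow_zero,
      one_mul, mul_one, Nat.zero_add, Nat.sub_self]
    match r with
    | 0 =>
      match k with
      | 0 => rfl
      | k + 1 => rfl
    | r + 1 =>
      have h1 : ¬ r + 1 < r + 1 := by omega
      match k with
      | 0 => simp [rStirling, h1, stirling2]
      | k + 1 =>
        have hk : k + 1 + (r + 1) ≠ r + 1 := by omega
        simp [rStirling, h1, hk, stirling2_of_lt (Nat.succ_pos k)]
  | succ n ih =>
    intro k
    have hA : ∑ j ∈ Finset.range (n + 2), Nat.choose n j * r ^ (n + 1 - j) * stirling2 j k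
        = r * ∑ j ∈ Finset.range (n + 1), Nat.choose n j * r ^ (n - j) * stirling2 j k := by
      rw [Finset.sum_range_succ, Nat.choose_succ_self]
      simp only [zero_mul, add_zero, Finset.mul_sum]
      refine Finset.sum_congr rfl fun j hj => ?_
      have hj' : j ≤ n := by simpa [Nat.lt_succ_iff] using hj
      have : n + 1 - j = (n - j) + 1 := by omega
      rw [this, pow_succ]; ring
    have hsplit : ∑ j ∈ Finset.range (n + 2),
          Nat.choose (n + 1) j * r ^ (n + 1 - j) * stirling2 j k
        = (∑ i ∈ Finset.range (n + 1),
            Nat.choose n i * r ^ (n - i) * stirling2 (i + 1) k)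
          + r * ∑ j ∈ Finset.range (n + 1),
              Nat.choose n j * r ^ (n - j) * stirling2 j k := by
      rw [Finset.sum_range_succ' (fun j => Nat.choose (n + 1) j * r ^ (n + 1 - j) * stirling2 j k)
        (n + 1)]
      rw [← hA, Finset.sum_range_succ' (fun j => Nat.choose n j * r ^ (n + 1 - j) * stirling2 j k)
        (n + 1)]
      simp only [Nat.choose_succ_succ', Nat.choose_zero_right, Nat.add_sub_cancel]
      rw [← add_assoc, ← Finset.sum_add_distrib]
      congr 1
      refine Finset.sum_congr rfl fun i _ => ?_
      have : n + 1 - (i + 1) = n - i := by omega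
      rw [this]; ring
    have hL : n + 1 + r = (n + r) + 1 := by omega
    have h1 : ¬ (n + r) + 1 < r := by omega
    have h2 : (n + r) + 1 ≠ r := by omega
    rw [hL, hsplit]
    match k with
    | 0 =>
      have hB : ∑ i ∈ Finset.range (n + 1),
          Nat.choose n i * r ^ (n - i) * stirling2 (i + 1) 0 = 0 :=
        Finset.sum_eq_zero fun i _ => by
          rw [show stirling2 (i + 1) 0 = 0 from rfl, mul_zero]
      rw [hB, zero_add, ← ih 0]
      match r with
      | 0 => simp [rStirling]
      | r + 1 =>
        have h3 : (0 : ℕ) + (r + 1) = r + 1 := by omega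
        rw [h3, rStirling_succ_succ (r + 1) (n + (r + 1)) r h1 h2,
          rStirling_of_lt (r + 1) (n + (r + 1)) r (by omega), add_zero, zero_add]
    | k + 1 =>
      have hB : ∑ i ∈ Finset.range (n + 1),
            Nat.choose n i * r ^ (n - i) * stirling2 (i + 1) (k + 1)
          = (k + 1) * (∑ i ∈ Finset.range (n + 1),
              Nat.choose n i * r ^ (n - i) * stirling2 i (k + 1))
            + ∑ i ∈ Finset.range (n + 1),
              Nat.choose n i * r ^ (n - i) * stirling2 i k := by
        rw [Finset.mul_sum, ← Finset.sum_add_distrib]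
        refine Finset.sum_congr rfl fun i _ => ?_
        rw [show stirling2 (i + 1) (k + 1)
          = (k + 1) * stirling2 i (k + 1) + stirling2 i k from rfl]
        ring
      rw [hB, ← ih (k + 1), ← ih k]
      have h3 : k + 1 + r = (k + r) + 1 := by omega
      rw [h3, rStirling_succ_succ r (n + r) (k + r) h1 h2, ← h3]
      ring

theorem rStirling_eq_sum_choose_stirling2 (n k r : ℕ) :
    rStirling r (n + r) (k + r) =
      ∑ j ∈ Finset.Icc k n, Nat.choose n j * r ^ (n - j) * stirling2 j k := by
  rw [key r n k]
  refine (Finset.sum_subset (fun j hj => ?_) (fun j hj hj' => ?_)).symm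
  · simp only [Finset.mem_Icc] at hj
    simp [Nat.lt_succ_iff, hj.2]
  · simp only [Finset.mem_range, Nat.lt_succ_iff] at hj
    simp only [Finset.mem_Icc, not_and, not_le] at hj'
    have : j < k := by omega
    rw [stirling2_of_lt this, mul_zero]
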